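/- (Condensed matrix via the elimination matrix F = C·T) Let A' be the saddle point matrix in block order S, N, M, λ: A' = [[K_SS, K_SN, 0, Dᵀ], [K_NS, K_NN, K_NM, 0], [0, K_MN, K_MM, −Mᵀ], [D, 0, −M, 0]], let T = [[I_nS, 0, 0, 0], [0, I_nN, 0, 0], [Pᵀ, 0, I_nM, 0], [0, 0, 0, I_nS]], and let C be the (nN+nM)×(nN+nM+2·nS) selection matrix [[0, I_nN, 0, 0], [0, 0, I_nM, 0]]. Then (C·T) · A' · (C·T)ᵀ = Â, where Â = [[K_NN, K_NM + K_NS·P], [K_MN + Pᵀ·K_SN, K_MM + Pᵀ·K_SS·P]]. -/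

import Mathlib

open Matrix

/-- **Condensed matrix via the elimination matrix `F = C·T`.** With the saddle
point matrix `A'` in block order S, N, M, λ, the transformation matrix `T`, and
the selection matrix `C = [[0,I,0,0],[0,0,I,0]]`, one has
`(C·T) · A' · (C·T)ᵀ = Â`. -/
theorem condensed_matrix_via_elimination_matrix
    (nN nM nS : ℕ)
    (K_NN : Matrix (Fin nN) (Fin nN) ℝ) (K_MM : Matrix (Fin nM) (Fin nM) ℝ)
    (K_SS : Matrix (Fin nS) (Fin nS) ℝ)
    (K_NM : Matrix (Fin nN) (Fin nM) ℝ) (K_NS : Matrix (Fin nN) (Fin nS) ℝ)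
    (hNN : K_NN.IsSymm) (hMM : K_MM.IsSymm) (hSS : K_SS.IsSymm)
    (D : Matrix (Fin nS) (Fin nS) ℝ) (M : Matrix (Fin nS) (Fin nM) ℝ)
    (hD : IsUnit D.det)
    (P : Matrix (Fin nS) (Fin nM) ℝ) (hP : P = D⁻¹ * M)
    -- the saddle point matrix, block order S, N, M, λ
    (A' : Matrix ((Fin nS ⊕ Fin nN) ⊕ (Fin nM ⊕ Fin nS))
                 ((Fin nS ⊕ Fin nN) ⊕ (Fin nM ⊕ Fin nS)) ℝ)
    (hA' : A' = fromBlocks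
      (fromBlocks K_SS K_NSᵀ K_NS K_NN)
      (fromBlocks 0 Dᵀ K_NM 0)
      (fromBlocks 0 K_NMᵀ D 0)
      (fromBlocks K_MM (-Mᵀ) (-M) 0))
    -- the block elementary transformation matrix T
    (T : Matrix ((Fin nS ⊕ Fin nN) ⊕ (Fin nM ⊕ Fin nS))
                ((Fin nS ⊕ Fin nN) ⊕ (Fin nM ⊕ Fin nS)) ℝ)
    (hT : T = fromBlocks 1 0 (fromBlocks Pᵀ 0 0 0) 1)
    -- the selection (condensation) matrix C = [[0, I, 0, 0], [0, 0, I, 0]]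
    (C : Matrix (Fin nN ⊕ Fin nM) ((Fin nS ⊕ Fin nN) ⊕ (Fin nM ⊕ Fin nS)) ℝ)
    (hC : C = fromBlocks (fromCols 0 1) 0 0 (fromCols 1 0))
    -- the condensed matrix
    (Ahat : Matrix (Fin nN ⊕ Fin nM) (Fin nN ⊕ Fin nM) ℝ)
    (hAhat : Ahat = fromBlocks
      K_NN (K_NM + K_NS * P)
      (K_NMᵀ + Pᵀ * K_NSᵀ) (K_MM + Pᵀ * K_SS * P)) :
    (C * T) * A' * (C * T)ᵀ = Ahat := by
  subst hP hA' hT hC hAhat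
  have hDP : D * (D⁻¹ * M) = M := by
    rw [← Matrix.mul_assoc, Matrix.mul_nonsing_inv D hD, Matrix.one_mul]
  have hSS' : K_SSᵀ = K_SS := hSS
  have hMM' : K_MMᵀ = K_MM := hMM
  have hDP' : Mᵀ * (D⁻¹)ᵀ * Dᵀ = Mᵀ := by
    have := congrArg Matrix.transpose hDP
    simpa [Matrix.transpose_mul, Matrix.mul_assoc] using this
  simp only [Matrix.fromBlocks_multiply, Matrix.fromBlocks_transpose,
    Matrix.transpose_fromCols, Matrix.fromCols_mul_fromBlocks,
    Matrix.fromBlocks_mul_fromRows, Matrix.fromCols_mul_fromRows,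
    Matrix.transpose_mul, Matrix.transpose_zero, Matrix.transpose_one,
    Matrix.transpose_neg, Matrix.transpose_transpose, Matrix.mul_zero,
    Matrix.zero_mul, Matrix.mul_one, Matrix.one_mul, add_zero,
    zero_add, Matrix.neg_mul, Matrix.mul_neg, hSS', hMM']
  simp only [Matrix.add_mul, Matrix.fromCols_mul_fromRows, Matrix.mul_zero,
    Matrix.zero_mul, Matrix.mul_one, Matrix.one_mul, add_zero, zero_add,
    neg_zero, Matrix.mul_assoc, hDP']
  rw [Matrix.fromBlocks_inj]
  refine ⟨rfl, add_comm _ _, add_comm _ _, ?_⟩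
  abel
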